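/- Let n ≥ 1 be a natural number and p, q ∈ [0,1], and set r := (1−q)³. For v : Fin n → Bool and ω : {(i,j) : Fin n × Fin n // i < j} → Bool define the weight W(v,ω) := (∏_{i} (if v(i) = true then r else 1−r)) · (∏_{(i,j), i<j} (if ω(i,j) = true then p else 1−p)), let G(ω) be the simple graph on Fin n in which distinct i, j are adjacent iff ω evaluated at (min(i,j), max(i,j)) is true, and let G(ω)[v] be the subgraph of G(ω) induced on the vertex set {i : v(i) = true}. Then Σ_{(v,ω) such that G(ω)[v] is not preconnected} W(v,ω) ≤ Σ_{m=0}^{n} (n choose m) · (1−q)^{3m} · (1−(1−q)³)^{n−m} · Σ_{k=1}^{⌊m/2⌋} (m choose k) · (1−p)^{k(m−k)}. -/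

import Mathlib

set_option maxHeartbeats 2000000



/-- The simple graph on `Fin n` determined by the edge indicator
`ω : {(i,j) : i < j} → Bool`: distinct vertices `i, j` are adjacent iff
`ω` evaluated at `(min i j, max i j)` is `true`. -/
def graphOf {n : ℕ} (ω : {ij : Fin n × Fin n // ij.1 < ij.2} → Bool) :
    SimpleGraph (Fin n) where
  Adj i j := ∃ h : min i j < max i j, ω ⟨(min i j, max i j), h⟩ = true
  symm := by
    constructor
    intro i j hij
    rwa [min_comm j i, max_comm j i]
  loopless := by
    constructor
    intro i hi
    obtain ⟨h, -⟩ := hi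
    simp at h

/-- The joint weight of a vertex-retention indicator `v` (each vertex independently
retained with probability `r`) and an edge configuration `ω` (each potential edge
independently present with probability `p`). -/
noncomputable def jointWeight {n : ℕ} (r p : ℝ) (v : Fin n → Bool)
    (ω : {ij : Fin n × Fin n // ij.1 < ij.2} → Bool) : ℝ :=
  (∏ i, (if v i = true then r else 1 - r)) *
    ∏ e : {ij : Fin n × Fin n // ij.1 < ij.2}, (if ω e = true then p else 1 - p)


open Classical in
lemma sum_prod_bool {ι : Type*} [Fintype ι] [DecidableEq ι] (h : ι → Bool → ℝ) :
    ∑ ω : ι → Bool, ∏ i, h i (ω i) = ∏ i, (h i true + h i false) := by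
  rw [Finset.prod_add]
  refine Finset.sum_nbij' (fun ω => Finset.univ.filter (fun i => ω i = true))
    (fun t => fun i => decide (i ∈ t)) ?_ ?_ ?_ ?_ ?_
  · intro ω _; exact Finset.mem_powerset.mpr (Finset.filter_subset _ _)
  · intro t _; exact Finset.mem_univ _
  · intro ω _; funext i; simp
  · intro t _; ext i; simp
  · intro ω _
    rw [← Finset.prod_filter_mul_prod_filter_not Finset.univ (fun i => ω i = true)]
    congr 1
    · exact Finset.prod_congr rfl (fun i hi => by simp at hi; rw [hi])
    · rw [show Finset.univ \ Finset.univ.filter (fun i => ω i = true)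
        = Finset.univ.filter (fun i => ¬ ω i = true) by ext i; simp]
      exact Finset.prod_congr rfl (fun i hi => by
        simp only [Finset.mem_filter] at hi
        rw [Bool.not_eq_true] at hi; rw [hi.2])

open Classical in
lemma union_bound {α β : Type*} [Fintype α] (B : Finset α) (I : Finset β) (E : β → Finset α)
    (w : α → ℝ) (hw : ∀ a, 0 ≤ w a) (hex : ∀ a ∈ B, ∃ b ∈ I, a ∈ E b) :
    ∑ a ∈ B, w a ≤ ∑ b ∈ I, ∑ a ∈ E b, w a := by
  calc ∑ a ∈ B, w a ≤ ∑ a ∈ B, ∑ b ∈ I, (if a ∈ E b then w a else 0) := by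
        apply Finset.sum_le_sum
        intro a ha
        obtain ⟨b, hb, hab⟩ := hex a ha
        have h1 : (if a ∈ E b then w a else 0) ≤ ∑ b ∈ I, (if a ∈ E b then w a else 0) :=
          Finset.single_le_sum (f := fun b => if a ∈ E b then w a else 0)
            (fun b _ => by by_cases h : a ∈ E b <;> simp [h, hw a]) hb
        rwa [if_pos hab] at h1
    _ = ∑ b ∈ I, ∑ a ∈ B, (if a ∈ E b then w a else 0) := Finset.sum_comm
    _ ≤ ∑ b ∈ I, ∑ a ∈ E b, w a := by
        apply Finset.sum_le_sum
        intro b _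
        rw [Finset.sum_ite_mem]
        exact Finset.sum_le_sum_of_subset_of_nonneg Finset.inter_subset_right
          (fun a _ _ => hw a)


open Classical in
lemma crossCard {n : ℕ} (A B : Finset (Fin n)) (hAB : Disjoint A B) :
    (Finset.univ.filter (fun e : {ij : Fin n × Fin n // ij.1 < ij.2} =>
      (e.1.1 ∈ A ∧ e.1.2 ∈ B) ∨ (e.1.1 ∈ B ∧ e.1.2 ∈ A))).card = A.card * B.card := by
  rw [← Finset.card_product]
  apply Finset.card_nbij (fun e => if e.1.1 ∈ A then (e.1.1, e.1.2) else (e.1.2, e.1.1))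
  · intro e he
    simp only [Finset.coe_filter, Set.mem_setOf_eq, Finset.mem_filter, Finset.mem_univ, true_and] at he
    rcases he with ⟨h1, h2⟩ | ⟨h1, h2⟩
    · simp [h1, h2, Finset.mem_product]
    · have : e.1.1 ∉ A := fun hc => (Finset.disjoint_left.mp hAB hc) h1
      simp [this, h1, h2, Finset.mem_product]
  · intro e he e' he' heq
    simp only [Finset.coe_filter, Set.mem_setOf_eq, Finset.mem_univ, true_and] at he he'
    have key : ∀ f : {ij : Fin n × Fin n // ij.1 < ij.2},
        ((f.1.1 ∈ A ∧ f.1.2 ∈ B) ∨ (f.1.1 ∈ B ∧ f.1.2 ∈ A)) →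
        (if f.1.1 ∈ A then (f.1.1, f.1.2) else (f.1.2, f.1.1))
          = if f.1.1 ∈ A then f.1 else f.1.swap := by
      intro f _; split <;> simp [Prod.swap]
    dsimp only at heq
    rw [key e he, key e' he'] at heq
    apply Subtype.ext
    by_cases h1 : e.1.1 ∈ A <;> by_cases h2 : e'.1.1 ∈ A <;>
      simp only [h1, h2, if_true, if_false] at heq
    · exact heq
    · exfalso
      have := e.2; have := e'.2
      rw [Prod.ext_iff] at heq; simp [Prod.swap] at heq
      omega
    · exfalso
      have := e.2; have := e'.2
      rw [Prod.ext_iff] at heq; simp [Prod.swap] at heq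
      omega
    · rw [Prod.ext_iff] at heq; simp [Prod.swap] at heq
      exact Prod.ext heq.2 heq.1
  · intro x hx
    simp only [Finset.coe_product, Set.mem_prod, Finset.mem_coe] at hx
    obtain ⟨hxA, hxB⟩ := hx
    have hne : x.1 ≠ x.2 := fun h => (Finset.disjoint_left.mp hAB hxA) (h ▸ hxB)
    rcases lt_or_gt_of_ne hne with hlt | hgt
    · refine ⟨⟨(x.1, x.2), hlt⟩, ?_, ?_⟩
      · simp [hxA, hxB]
      · simp [hxA]
    · refine ⟨⟨(x.2, x.1), hgt⟩, ?_, ?_⟩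
      · simp [hxA, hxB]
      · have : x.2 ∉ A := fun hc => (Finset.disjoint_right.mp hAB hxB) hc
        simp [this, hxA]

lemma graphOf_adj {n : ℕ} (ω : {ij : Fin n × Fin n // ij.1 < ij.2} → Bool)
    (e : {ij : Fin n × Fin n // ij.1 < ij.2}) (h : ω e = true) :
    (graphOf ω).Adj e.1.1 e.1.2 := by
  obtain ⟨⟨i, j⟩, hij⟩ := e
  simp only at h ⊢
  have hmin : min i j = i := min_eq_left hij.le
  have hmax : max i j = j := max_eq_right hij.le
  refine ⟨by rw [hmin, hmax]; exact hij, ?_⟩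
  convert h using 2
  exact Subtype.ext (Prod.ext hmin hmax)


open Classical in
lemma exists_cut {n : ℕ} (v : Fin n → Bool) (ω : {ij : Fin n × Fin n // ij.1 < ij.2} → Bool)
    (h : ¬ ((graphOf ω).induce {i | v i = true}).Preconnected) :
    ∃ T : Finset (Fin n), T ⊆ Finset.univ.filter (fun i => v i = true) ∧ T.Nonempty ∧
      2 * T.card ≤ (Finset.univ.filter (fun i => v i = true)).card ∧
      ∀ i ∈ T, ∀ j ∈ Finset.univ.filter (fun i => v i = true) \ T, ¬ (graphOf ω).Adj i j := by
  set S := Finset.univ.filter (fun i => v i = true) with hS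
  simp only [SimpleGraph.Preconnected, not_forall] at h
  obtain ⟨a, b, hab⟩ := h
  set G := (graphOf ω).induce {i | v i = true} with hG
  set T0 : Finset (Fin n) := S.filter (fun i => ∃ hi : v i = true, G.Reachable a ⟨i, hi⟩) with hT0
  have hT0S : T0 ⊆ S := Finset.filter_subset _ _
  have haT0 : a.1 ∈ T0 := by
    refine Finset.mem_filter.mpr ⟨Finset.mem_filter.mpr ⟨Finset.mem_univ _, a.2⟩, a.2, ?_⟩
    exact SimpleGraph.Reachable.refl _
  have hbS : b.1 ∈ S := Finset.mem_filter.mpr ⟨Finset.mem_univ _, b.2⟩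
  have hbT0 : b.1 ∉ T0 := by
    intro hb
    obtain ⟨-, hb2, hr⟩ := Finset.mem_filter.mp hb
    exact hab hr
  have hcross : ∀ i ∈ T0, ∀ j ∈ S \ T0, ¬ (graphOf ω).Adj i j := by
    intro i hi j hj hadj
    obtain ⟨hiS, hvi, hri⟩ := Finset.mem_filter.mp hi
    obtain ⟨hjS, hjT0⟩ := Finset.mem_sdiff.mp hj
    have hvj : v j = true := (Finset.mem_filter.mp hjS).2
    apply hjT0
    refine Finset.mem_filter.mpr ⟨hjS, hvj, hri.trans ?_⟩
    exact SimpleGraph.Adj.reachable (by exact hadj : G.Adj ⟨i, hvi⟩ ⟨j, hvj⟩)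
  have hT0card : T0.card ≤ S.card := Finset.card_le_card hT0S
  by_cases hhalf : 2 * T0.card ≤ S.card
  · exact ⟨T0, hT0S, ⟨a.1, haT0⟩, hhalf, hcross⟩
  · refine ⟨S \ T0, Finset.sdiff_subset, ⟨b.1, Finset.mem_sdiff.mpr ⟨hbS, hbT0⟩⟩, ?_, ?_⟩
    · rw [Finset.card_sdiff_of_subset hT0S]; omega
    · intro i hi j hj hadj
      rw [sdiff_sdiff_right_self, Finset.inf_eq_inter,
        Finset.inter_eq_right.mpr hT0S] at hj
      exact hcross j hj i hi hadj.symm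

open Classical in
lemma event_sum_bound {ι : Type*} [Fintype ι] [DecidableEq ι] (p : ℝ) (hp0 : 0 ≤ p) (hp1 : p ≤ 1)
    (C : Finset ι) :
    ∑ ω ∈ Finset.univ.filter (fun ω : ι → Bool => ∀ e ∈ C, ω e = false),
      ∏ e, (if ω e = true then p else 1 - p) ≤ (1 - p) ^ C.card := by
  set g : ι → Bool → ℝ := fun e b =>
    if e ∈ C then (if b then 0 else 1 - p) else (if b then p else 1 - p) with hg
  have hgnn : ∀ e b, 0 ≤ g e b := by
    intro e b
    simp only [hg]
    split <;> split <;> linarith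
  calc ∑ ω ∈ Finset.univ.filter (fun ω : ι → Bool => ∀ e ∈ C, ω e = false),
        ∏ e, (if ω e = true then p else 1 - p)
      = ∑ ω ∈ Finset.univ.filter (fun ω : ι → Bool => ∀ e ∈ C, ω e = false),
        ∏ e, g e (ω e) := by
        apply Finset.sum_congr rfl
        intro ω hω
        simp only [Finset.mem_filter] at hω
        apply Finset.prod_congr rfl
        intro e _
        by_cases he : e ∈ C
        · rw [hω.2 e he]; simp [hg, he]
        · simp [hg, he]
    _ ≤ ∑ ω : ι → Bool, ∏ e, g e (ω e) :=
        Finset.sum_le_sum_of_subset_of_nonneg (Finset.filter_subset _ _)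
          (fun ω _ _ => Finset.prod_nonneg (fun e _ => hgnn e (ω e)))
    _ = ∏ e, (g e true + g e false) := sum_prod_bool g
    _ = ∏ e, (if e ∈ C then (1 - p) else 1) := by
        apply Finset.prod_congr rfl
        intro e _
        by_cases he : e ∈ C <;> simp [hg, he] <;> ring
    _ = (1 - p) ^ C.card := by
        rw [Finset.prod_ite_mem, Finset.univ_inter, Finset.prod_const]

open Classical in
lemma edge_sum_bound {n : ℕ} (p : ℝ) (hp0 : 0 ≤ p) (hp1 : p ≤ 1) (v : Fin n → Bool) :
    ∑ ω ∈ Finset.univ.filter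
        (fun ω : {ij : Fin n × Fin n // ij.1 < ij.2} → Bool =>
          ¬ ((graphOf ω).induce {i | v i = true}).Preconnected),
      ∏ e, (if ω e = true then p else 1 - p)
    ≤ ∑ k ∈ Finset.Icc 1 ((Finset.univ.filter (fun i => v i = true)).card / 2),
        (((Finset.univ.filter (fun i => v i = true)).card.choose k : ℝ) *
          (1 - p) ^ (k * ((Finset.univ.filter (fun i => v i = true)).card - k))) := by
  set S := Finset.univ.filter (fun i => v i = true) with hS
  set m := S.card with hm
  set Cross : Finset (Fin n) → Finset {ij : Fin n × Fin n // ij.1 < ij.2} := fun T =>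
    Finset.univ.filter (fun e => (e.1.1 ∈ T ∧ e.1.2 ∈ S \ T) ∨ (e.1.1 ∈ S \ T ∧ e.1.2 ∈ T))
    with hCross
  set E : Finset (Fin n) → Finset ({ij : Fin n × Fin n // ij.1 < ij.2} → Bool) := fun T =>
    Finset.univ.filter (fun ω => ∀ e ∈ Cross T, ω e = false) with hE
  set I : Finset (Finset (Fin n)) :=
    (Finset.Icc 1 (m / 2)).biUnion (fun k => S.powersetCard k) with hI
  have step1 : ∑ ω ∈ Finset.univ.filter
        (fun ω : {ij : Fin n × Fin n // ij.1 < ij.2} → Bool =>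
          ¬ ((graphOf ω).induce {i | v i = true}).Preconnected),
      ∏ e, (if ω e = true then p else 1 - p)
      ≤ ∑ T ∈ I, ∑ ω ∈ E T, ∏ e, (if ω e = true then p else 1 - p) := by
    apply union_bound
    · intro ω
      exact Finset.prod_nonneg (fun e _ => by split <;> linarith)
    · intro ω hω
      simp only [Finset.mem_filter, Finset.mem_univ, true_and] at hω
      obtain ⟨T, hTS, hTne, hTcard, hcross⟩ := exists_cut v ω hω
      rw [← hS] at hTS hTcard hcross
      refine ⟨T, ?_, ?_⟩
      · rw [hI, Finset.mem_biUnion]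
        exact ⟨T.card, Finset.mem_Icc.mpr ⟨Finset.card_pos.mpr hTne,
          Nat.le_div_iff_mul_le two_pos |>.mpr (by omega)⟩,
          Finset.mem_powersetCard.mpr ⟨hTS, rfl⟩⟩
      · simp only [hE, Finset.mem_filter, Finset.mem_univ, true_and]
        intro e he
        simp only [hCross, Finset.mem_filter, Finset.mem_univ, true_and] at he
        rw [Bool.eq_false_iff]
        intro hcon
        have hadj := graphOf_adj ω e hcon
        rcases he with ⟨h1, h2⟩ | ⟨h1, h2⟩
        · exact hcross e.1.1 h1 e.1.2 h2 hadj
        · exact hcross e.1.2 h2 e.1.1 h1 hadj.symm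
  refine step1.trans ?_
  have step2 : ∀ T ∈ I, ∑ ω ∈ E T, ∏ e, (if ω e = true then p else 1 - p)
      ≤ (1 - p) ^ (T.card * (m - T.card)) := by
    intro T hT
    rw [hI, Finset.mem_biUnion] at hT
    obtain ⟨k, hk, hTk⟩ := hT
    rw [Finset.mem_powersetCard] at hTk
    have hdisj : Disjoint T (S \ T) := Finset.disjoint_sdiff
    have hcc : (Cross T).card = T.card * (m - T.card) := by
      rw [hCross]
      rw [crossCard T (S \ T) hdisj, Finset.card_sdiff_of_subset hTk.1, hm]
    rw [← hcc]
    exact event_sum_bound p hp0 hp1 (Cross T)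
  have step3 : ∑ T ∈ I, ∑ ω ∈ E T, ∏ e, (if ω e = true then p else 1 - p)
      ≤ ∑ T ∈ I, (1 - p) ^ (T.card * (m - T.card)) := Finset.sum_le_sum step2
  refine step3.trans ?_
  rw [hI, Finset.sum_biUnion]
  · apply le_of_eq
    apply Finset.sum_congr rfl
    intro k hk
    rw [Finset.sum_congr rfl (fun T hT => by
      rw [(Finset.mem_powersetCard.mp hT).2]), Finset.sum_const,
      Finset.card_powersetCard, nsmul_eq_mul, ← hm]
  · intro k hk k' hk' hne
    simp only [Function.onFun]
    rw [Finset.disjoint_left]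
    intro T hT hT'
    rw [Finset.mem_powersetCard] at hT hT'
    exact hne (hT.2 ▸ hT'.2 ▸ rfl)

open Classical in
lemma vertex_weight_val {n : ℕ} (r : ℝ) (v : Fin n → Bool) :
    ∏ i, (if v i = true then r else 1 - r)
      = r ^ (Finset.univ.filter (fun i => v i = true)).card
        * (1 - r) ^ (n - (Finset.univ.filter (fun i => v i = true)).card) := by
  rw [← Finset.prod_filter_mul_prod_filter_not Finset.univ (fun i => v i = true)]
  have h1 : ∏ i ∈ Finset.univ.filter (fun i => v i = true),
      (if v i = true then r else 1 - r)
      = r ^ (Finset.univ.filter (fun i => v i = true)).card := by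
    rw [Finset.prod_congr rfl (fun i hi => if_pos (Finset.mem_filter.mp hi).2),
      Finset.prod_const]
  have h2 : ∏ i ∈ Finset.univ.filter (fun i => ¬ v i = true),
      (if v i = true then r else 1 - r)
      = (1 - r) ^ (n - (Finset.univ.filter (fun i => v i = true)).card) := by
    rw [Finset.prod_congr rfl (fun i hi => if_neg (Finset.mem_filter.mp hi).2),
      Finset.prod_const]
    congr 1
    have := Finset.card_filter_add_card_filter_not
      (s := (Finset.univ : Finset (Fin n))) (p := fun i => v i = true)
    simp only [Finset.card_univ, Fintype.card_fin] at this
    omega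
  rw [h1, h2]


-- **Statement 9.** (Theorem 6 of the paper.) With each vertex independently retained
-- with probability `(1−q)³` and each edge present with probability `p`, the
-- probability that the graph induced on the retained vertices is disconnected is at
-- most `Σ_m C(n,m)(1−q)^{3m}(1−(1−q)³)^{n−m} Σ_{k=1}^{⌊m/2⌋} C(m,k)(1−p)^{k(m−k)}`.
open Classical in
theorem ccesa_privacy_failure_bound (n : ℕ) (hn : 1 ≤ n) (p q : ℝ)
    (hp : p ∈ Set.Icc (0:ℝ) 1) (hq : q ∈ Set.Icc (0:ℝ) 1) :
    ∑ x ∈ Finset.univ.filter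
        (fun x : (Fin n → Bool) × ({ij : Fin n × Fin n // ij.1 < ij.2} → Bool) =>
          ¬ ((graphOf x.2).induce {i | x.1 i = true}).Preconnected),
      jointWeight ((1-q)^3) p x.1 x.2
      ≤ ∑ m ∈ Finset.range (n+1),
          (n.choose m : ℝ) * (1-q)^(3*m) * (1-(1-q)^3)^(n-m) *
            ∑ k ∈ Finset.Icc 1 (m/2), (m.choose k : ℝ) * (1-p)^(k*(m-k)) := by
  obtain ⟨hp0, hp1⟩ := hp
  obtain ⟨hq0, hq1⟩ := hq
  have hr0 : (0:ℝ) ≤ (1-q)^3 := pow_nonneg (by linarith) 3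
  have hr1 : (1-q)^3 ≤ 1 := pow_le_one₀ (by linarith) (by linarith)
  have hwvnn : ∀ v : Fin n → Bool, 0 ≤ ∏ i, (if v i = true then (1-q)^3 else 1 - (1-q)^3) :=
    fun v => Finset.prod_nonneg (fun i _ => by split <;> linarith)
  have stepA : ∑ x ∈ Finset.univ.filter
        (fun x : (Fin n → Bool) × ({ij : Fin n × Fin n // ij.1 < ij.2} → Bool) =>
          ¬ ((graphOf x.2).induce {i | x.1 i = true}).Preconnected),
      jointWeight ((1-q)^3) p x.1 x.2
      ≤ ∑ v : Fin n → Bool,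
          (∏ i, (if v i = true then (1-q)^3 else 1 - (1-q)^3)) *
          ∑ k ∈ Finset.Icc 1 ((Finset.univ.filter (fun i => v i = true)).card / 2),
            (((Finset.univ.filter (fun i => v i = true)).card.choose k : ℝ) *
              (1 - p) ^ (k * ((Finset.univ.filter (fun i => v i = true)).card - k))) := by
    rw [Finset.sum_filter, Fintype.sum_prod_type]
    apply Finset.sum_le_sum
    intro v _
    have heq : ∑ ω : {ij : Fin n × Fin n // ij.1 < ij.2} → Bool,
        (if ¬ ((graphOf ω).induce {i | v i = true}).Preconnected
          then jointWeight ((1-q)^3) p v ω else 0)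
        = (∏ i, (if v i = true then (1-q)^3 else 1 - (1-q)^3)) *
          ∑ ω ∈ Finset.univ.filter
            (fun ω : {ij : Fin n × Fin n // ij.1 < ij.2} → Bool =>
              ¬ ((graphOf ω).induce {i | v i = true}).Preconnected),
            ∏ e, (if ω e = true then p else 1 - p) := by
      rw [Finset.mul_sum, ← Finset.sum_filter]
      apply Finset.sum_congr rfl
      intro ω _
      rfl
    rw [heq]
    exact mul_le_mul_of_nonneg_left (edge_sum_bound p hp0 hp1 v) (hwvnn v)
  refine stepA.trans ?_
  have stepC : ∑ v : Fin n → Bool,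
        (∏ i, (if v i = true then (1-q)^3 else 1 - (1-q)^3)) *
        ∑ k ∈ Finset.Icc 1 ((Finset.univ.filter (fun i => v i = true)).card / 2),
          (((Finset.univ.filter (fun i => v i = true)).card.choose k : ℝ) *
            (1 - p) ^ (k * ((Finset.univ.filter (fun i => v i = true)).card - k)))
      = ∑ A ∈ (Finset.univ : Finset (Fin n)).powerset,
          ((1-q)^3) ^ A.card * (1 - (1-q)^3) ^ (n - A.card) *
          ∑ k ∈ Finset.Icc 1 (A.card / 2),
            ((A.card.choose k : ℝ) * (1 - p) ^ (k * (A.card - k))) := by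
    refine Finset.sum_nbij' (fun v => Finset.univ.filter (fun i => v i = true))
      (fun A => fun i => decide (i ∈ A)) ?_ ?_ ?_ ?_ ?_
    · intro v _; exact Finset.mem_powerset.mpr (Finset.filter_subset _ _)
    · intro A _; exact Finset.mem_univ _
    · intro v _; funext i; simp
    · intro A _; ext i; simp
    · intro v _
      rw [vertex_weight_val]
  rw [stepC, Finset.sum_powerset]
  have hcard : (Finset.univ : Finset (Fin n)).card = n := by simp
  rw [hcard]
  apply le_of_eq
  apply Finset.sum_congr rfl
  intro m hm
  rw [Finset.sum_congr rfl (fun A hA => by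
    rw [(Finset.mem_powersetCard.mp hA).2]), Finset.sum_const,
    Finset.card_powersetCard, hcard, nsmul_eq_mul]
  rw [← pow_mul]
  ring
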